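/- For n, k ≥ 1, the number of flattened permutations of {1,...,n} with exactly k right-to-left minima equals the Stirling number of the second kind S(n−1, k−1). -/

import Mathlib

open Finset

/-- `ℓ` is a valley of `π`: `2 ≤ ℓ ≤ n-1` (1-based) with `π(ℓ-1) > π(ℓ) < π(ℓ+1)`. -/
def IsValley {n : ℕ} (π : Equiv.Perm (Fin n)) (ℓ : Fin n) : Prop :=
  1 ≤ ℓ.val ∧ ∃ h2 : ℓ.val + 1 < n,
    π ⟨ℓ.val - 1, lt_of_le_of_lt (Nat.sub_le _ _) ℓ.isLt⟩ > π ℓ ∧ π ℓ < π ⟨ℓ.val + 1, h2⟩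

/-- number of valleys of `π` -/
noncomputable def valCount {n : ℕ} (π : Equiv.Perm (Fin n)) : ℕ :=
  {ℓ : Fin n | IsValley π ℓ}.ncard

/-- `ℓ` is a peak of `π`. -/
def IsPeak {n : ℕ} (π : Equiv.Perm (Fin n)) (ℓ : Fin n) : Prop :=
  1 ≤ ℓ.val ∧ ∃ h2 : ℓ.val + 1 < n,
    π ⟨ℓ.val - 1, lt_of_le_of_lt (Nat.sub_le _ _) ℓ.isLt⟩ < π ℓ ∧ π ℓ > π ⟨ℓ.val + 1, h2⟩

/-- number of peaks of `π` -/
noncomputable def peakCount {n : ℕ} (π : Equiv.Perm (Fin n)) : ℕ :=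
  {ℓ : Fin n | IsPeak π ℓ}.ncard

/-- number of descents of `π` -/
noncomputable def desCount {n : ℕ} (π : Equiv.Perm (Fin n)) : ℕ :=
  {ℓ : Fin n | ∃ h : ℓ.val + 1 < n, π ⟨ℓ.val + 1, h⟩ < π ℓ}.ncard

/-- `π` is increasing: the values at its valleys, from left to right, strictly increase. -/
def Increasing {n : ℕ} (π : Equiv.Perm (Fin n)) : Prop :=
  ∀ i j : Fin n, IsValley π i → IsValley π j → i < j → π i < π j

/-- `ℓ` is the first position of a (maximal increasing) run of `π`. -/
def IsRunStart {n : ℕ} (π : Equiv.Perm (Fin n)) (ℓ : Fin n) : Prop :=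
  ℓ.val = 0 ∨ π ⟨ℓ.val - 1, lt_of_le_of_lt (Nat.sub_le _ _) ℓ.isLt⟩ > π ℓ

/-- number of (maximal increasing) runs of `π` -/
noncomputable def runCount {n : ℕ} (π : Equiv.Perm (Fin n)) : ℕ :=
  {ℓ : Fin n | IsRunStart π ℓ}.ncard

/-- `π` is flattened: the first entries of its runs, from left to right, increase. -/
def Flattened {n : ℕ} (π : Equiv.Perm (Fin n)) : Prop :=
  ∀ i j : Fin n, IsRunStart π i → IsRunStart π j → i < j → π i < π j

/-- `π i` is a right-to-left minimum of `π`. -/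
def IsRLMin {n : ℕ} (π : Equiv.Perm (Fin n)) (i : Fin n) : Prop :=
  ∀ j : Fin n, i < j → π i < π j

/-- number of right-to-left minima of `π` -/
noncomputable def rlmCount {n : ℕ} (π : Equiv.Perm (Fin n)) : ℕ :=
  {i : Fin n | IsRLMin π i}.ncard

/-- Stirling numbers of the second kind. -/
def stirling2 : ℕ → ℕ → ℕ
  | 0, 0 => 1
  | 0, _+1 => 0
  | _+1, 0 => 0
  | n+1, k+1 => (k+1) * stirling2 n (k+1) + stirling2 n k


namespace FlatAux
open Equiv

variable {n : ℕ}

def ins (σ : Equiv.Perm (Fin (n+1))) (p : Fin (n+2)) : Equiv.Perm (Fin (n+2)) :=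
  (finSuccEquiv' p).trans ((Equiv.optionCongr σ).trans (finSuccEquiv' (Fin.last (n+1))).symm)

lemma ins_self (σ : Equiv.Perm (Fin (n+1))) (p : Fin (n+2)) :
    ins σ p p = Fin.last (n+1) := by
  simp [ins]

lemma ins_succAbove (σ : Equiv.Perm (Fin (n+1))) (p : Fin (n+2)) (j : Fin (n+1)) :
    ins σ p (p.succAbove j) = (σ j).castSucc := by
  simp only [ins, Equiv.trans_apply, finSuccEquiv'_succAbove, Equiv.optionCongr_apply,
    Option.map_some]
  exact finSuccEquiv'_symm_some_below (Fin.castSucc_lt_last _)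

lemma ins_lt {σ : Equiv.Perm (Fin (n+1))} {p q : Fin (n+2)} (h : q.val < p.val) :
    ins σ p q = (σ ⟨q.val, by have := p.isLt; omega⟩).castSucc := by
  have hq : p.succAbove ⟨q.val, by have := p.isLt; omega⟩ = q := by
    rw [Fin.succAbove_of_castSucc_lt]
    · exact Fin.ext rfl
    · rw [Fin.lt_def]; exact h
  exact (congrArg (ins σ p) hq).symm.trans (ins_succAbove σ p _)

lemma ins_gt {σ : Equiv.Perm (Fin (n+1))} {p q : Fin (n+2)} (h : p.val < q.val) :
    ins σ p q = (σ ⟨q.val - 1, by have := q.isLt; omega⟩).castSucc := by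
  have hq : p.succAbove ⟨q.val - 1, by have := q.isLt; omega⟩ = q := by
    rw [Fin.succAbove_of_le_castSucc]
    · exact Fin.ext (by simp; omega)
    · rw [Fin.le_def]; simp; omega
  exact (congrArg (ins σ p) hq).symm.trans (ins_succAbove σ p _)

lemma succAbove_val (p : Fin (n+2)) (j : Fin (n+1)) :
    (p.succAbove j).val = if j.val < p.val then j.val else j.val + 1 := by
  rcases lt_or_ge (j.castSucc) p with h | h
  · rw [Fin.succAbove_of_castSucc_lt _ _ h]
    have : j.val < p.val := h
    simp [this]
  · rw [Fin.succAbove_of_le_castSucc _ _ h]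
    have : ¬ j.val < p.val := by rw [Fin.le_def] at h; simp at h ⊢; omega
    simp [this]

lemma rs_lt {σ : Equiv.Perm (Fin (n+1))} {p q : Fin (n+2)} (h : q.val < p.val) :
    IsRunStart (ins σ p) q ↔ IsRunStart σ ⟨q.val, by have := p.isLt; omega⟩ := by
  have hp := p.isLt
  rcases Nat.eq_zero_or_pos q.val with h0 | h0
  · constructor <;> intro _ <;> exact Or.inl h0
  · have e1 : ins σ p q = (σ ⟨q.val, by omega⟩).castSucc := ins_lt h
    have hlt : ((⟨q.val - 1, by omega⟩ : Fin (n+2))).val < p.val := by simp; omega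
    have e2 : ins σ p ⟨q.val - 1, by omega⟩ = (σ ⟨q.val - 1, by omega⟩).castSucc := ins_lt hlt
    constructor
    · rintro (h' | h')
      · exact Or.inl h'
      · refine Or.inr ?_
        rw [e1, e2] at h'
        exact (Fin.castSucc_lt_castSucc_iff).mp h'
    · rintro (h' | h')
      · exact Or.inl h'
      · refine Or.inr ?_
        rw [e1, e2]
        exact (Fin.castSucc_lt_castSucc_iff).mpr h'

lemma rs_self {σ : Equiv.Perm (Fin (n+1))} {p : Fin (n+2)} :
    IsRunStart (ins σ p) p ↔ p.val = 0 := by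
  constructor
  · rintro (h' | h')
    · exact h'
    · exfalso
      rw [ins_self] at h'
      exact absurd h' (not_lt.mpr (Fin.le_last _))
  · intro h'; exact Or.inl h'

lemma rs_succ {σ : Equiv.Perm (Fin (n+1))} {p : Fin (n+2)} (h2 : p.val + 1 < n + 2) :
    IsRunStart (ins σ p) ⟨p.val + 1, h2⟩ := by
  refine Or.inr ?_
  show ins σ p ⟨p.val + 1 - 1, by omega⟩ > ins σ p ⟨p.val + 1, h2⟩
  have hpp : (⟨p.val + 1 - 1, by omega⟩ : Fin (n+2)) = p := Fin.ext (by simp)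
  rw [hpp, ins_self, ins_gt (show p.val < ((⟨p.val + 1, h2⟩ : Fin (n+2))).val by simp)]
  exact Fin.castSucc_lt_last _

lemma rs_gt {σ : Equiv.Perm (Fin (n+1))} {p q : Fin (n+2)} (h : p.val + 1 < q.val) :
    IsRunStart (ins σ p) q ↔ IsRunStart σ ⟨q.val - 1, by have := q.isLt; omega⟩ := by
  have hq := q.isLt
  have hgt : p.val < q.val := by omega
  have hlt1 : p.val < ((⟨q.val - 1, by omega⟩ : Fin (n+2))).val := by simp; omega
  have e1 : ins σ p q = (σ ⟨q.val - 1, by omega⟩).castSucc := ins_gt hgt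
  have e2 : ins σ p ⟨q.val - 1, by omega⟩ = (σ ⟨q.val - 1 - 1, by omega⟩).castSucc :=
    ins_gt hlt1
  constructor
  · rintro (h' | h')
    · omega
    · refine Or.inr ?_
      rw [e1, e2] at h'
      exact (Fin.castSucc_lt_castSucc_iff).mp h'
  · rintro (h' | h')
    · omega
    · refine Or.inr ?_
      rw [e1, e2]
      exact (Fin.castSucc_lt_castSucc_iff).mpr h'

lemma rlm_lt {σ : Equiv.Perm (Fin (n+1))} {p q : Fin (n+2)} (h : q.val < p.val) :
    IsRLMin (ins σ p) q ↔ IsRLMin σ ⟨q.val, by have := p.isLt; omega⟩ := by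
  have hp := p.isLt
  constructor
  · intro hu j hj
    have hj' : q.val < j.val := hj
    have hjlt := j.isLt
    rcases lt_or_ge j.val p.val with hc | hc
    · have hr : q < (⟨j.val, by omega⟩ : Fin (n+2)) := hj'
      have h2 := hu _ hr
      rw [ins_lt h, ins_lt (show ((⟨j.val, by omega⟩ : Fin (n+2))).val < p.val from hc)] at h2
      exact Fin.castSucc_lt_castSucc_iff.mp h2
    · have hr : q < (⟨j.val + 1, by omega⟩ : Fin (n+2)) := by
        rw [Fin.lt_def]; simp; omega
      have h2 := hu _ hr
      rw [ins_lt h, ins_gt (show p.val < ((⟨j.val + 1, by omega⟩ : Fin (n+2))).val by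
        simp; omega)] at h2
      exact Fin.castSucc_lt_castSucc_iff.mp h2
  · intro hs r hr
    have hr' : q.val < r.val := hr
    have hrlt := r.isLt
    rcases lt_trichotomy r.val p.val with hc | hc | hc
    · rw [ins_lt h, ins_lt hc]
      exact Fin.castSucc_lt_castSucc_iff.mpr (hs ⟨r.val, by omega⟩ hr')
    · have hrp : r = p := Fin.ext hc
      rw [hrp, ins_self, ins_lt h]; exact Fin.castSucc_lt_last _
    · rw [ins_lt h, ins_gt hc]
      refine Fin.castSucc_lt_castSucc_iff.mpr (hs ⟨r.val - 1, by omega⟩ ?_)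
      show q.val < r.val - 1
      omega

lemma rlm_gt {σ : Equiv.Perm (Fin (n+1))} {p q : Fin (n+2)} (h : p.val < q.val) :
    IsRLMin (ins σ p) q ↔ IsRLMin σ ⟨q.val - 1, by have := q.isLt; omega⟩ := by
  have hq := q.isLt
  constructor
  · intro hu j hj
    have hj' : q.val - 1 < j.val := hj
    have hjlt := j.isLt
    have hr : q < (⟨j.val + 1, by omega⟩ : Fin (n+2)) := by
      rw [Fin.lt_def]; simp; omega
    have h2 := hu _ hr
    rw [ins_gt h, ins_gt (show p.val < ((⟨j.val + 1, by omega⟩ : Fin (n+2))).val by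
      simp; omega)] at h2
    exact Fin.castSucc_lt_castSucc_iff.mp h2
  · intro hs r hr
    have hr' : q.val < r.val := hr
    have hrlt := r.isLt
    have hrp : p.val < r.val := by omega
    rw [ins_gt h, ins_gt hrp]
    refine Fin.castSucc_lt_castSucc_iff.mpr (hs ⟨r.val - 1, by omega⟩ ?_)
    show q.val - 1 < r.val - 1
    omega

lemma rlm_self {σ : Equiv.Perm (Fin (n+1))} {p : Fin (n+2)} :
    IsRLMin (ins σ p) p ↔ p.val = n + 1 := by
  constructor
  · intro hu
    by_contra hne
    have hlt : p.val < n + 1 := by have := p.isLt; omega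
    have hr : p < (⟨p.val + 1, by omega⟩ : Fin (n+2)) := by
      rw [Fin.lt_def]; simp
    have h2 := hu _ hr
    rw [ins_self] at h2
    exact absurd h2 (not_lt.mpr (Fin.le_last _))
  · intro hl j hj
    exfalso
    have := j.isLt
    have hj' : p.val < j.val := hj
    omega

lemma rlm_succAbove {σ : Equiv.Perm (Fin (n+1))} {p : Fin (n+2)} (j : Fin (n+1)) :
    IsRLMin (ins σ p) (p.succAbove j) ↔ IsRLMin σ j := by
  have hv := succAbove_val p j
  have hjlt := j.isLt
  rcases lt_or_ge j.val p.val with hc | hc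
  · have hq : (p.succAbove j).val < p.val := by rw [hv]; simp [hc]
    refine (rlm_lt hq).trans ?_
    have he : (⟨(p.succAbove j).val, by have := p.isLt; omega⟩ : Fin (n+1)) = j :=
      Fin.ext (by simp only [Fin.val_mk]; rw [hv]; simp [hc])
    rw [he]
  · have hq : p.val < (p.succAbove j).val := by rw [hv]; simp [Nat.not_lt.mpr hc]; omega
    refine (rlm_gt hq).trans ?_
    have he : (⟨(p.succAbove j).val - 1, by have := (p.succAbove j).isLt; omega⟩ : Fin (n+1)) = j :=
      Fin.ext (by simp only [Fin.val_mk]; rw [hv]; simp [Nat.not_lt.mpr hc])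
    rw [he]

lemma rlm_ins_set (σ : Equiv.Perm (Fin (n+1))) (p : Fin (n+2)) :
    {i : Fin (n+2) | IsRLMin (ins σ p) i}
      = p.succAbove '' {j : Fin (n+1) | IsRLMin σ j}
        ∪ (if p.val = n + 1 then {p} else ∅) := by
  ext i
  rcases eq_or_ne i p with rfl | hip
  · simp only [Set.mem_setOf_eq, Set.mem_union, rlm_self]
    constructor
    · intro h; right; simp [h]
    · rintro (⟨j, hj, hje⟩ | h)
      · exact absurd hje (Fin.succAbove_ne _ _)
      · by_cases hc : i.val = n + 1
        · exact hc
        · simp [hc] at h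
  · obtain ⟨j, rfl⟩ := Fin.exists_succAbove_eq hip
    simp only [Set.mem_setOf_eq, Set.mem_union]
    rw [rlm_succAbove]
    constructor
    · intro h; left; exact ⟨j, h, rfl⟩
    · rintro (⟨j', hj', hje⟩ | h)
      · rwa [← Fin.succAbove_right_injective hje]
      · by_cases hc : p.val = n + 1 <;> simp [hc] at h

lemma rlmCount_ins (σ : Equiv.Perm (Fin (n+1))) (p : Fin (n+2)) :
    rlmCount (ins σ p) = rlmCount σ + (if p.val = n + 1 then 1 else 0) := by
  unfold rlmCount
  rw [rlm_ins_set, Set.ncard_union_eq ?dis (Set.toFinite _) (Set.toFinite _)]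
  · rw [Set.ncard_image_of_injective _ Fin.succAbove_right_injective]
    congr 1
    by_cases hc : p.val = n + 1 <;> simp [hc]
  case dis =>
    by_cases hc : p.val = n + 1 <;> simp [hc]

lemma not_rs_lt {m : ℕ} {σ : Equiv.Perm (Fin (m+1))} {r : ℕ} {hr : r < m+1} (h0 : r ≠ 0)
    (hnr : ¬ IsRunStart σ ⟨r, hr⟩) : σ ⟨r - 1, by omega⟩ < σ ⟨r, hr⟩ := by
  rcases lt_trichotomy (σ ⟨r - 1, by omega⟩) (σ ⟨r, hr⟩) with h | h | h
  · exact h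
  · exfalso
    have h2 := congrArg Fin.val (σ.injective h)
    simp at h2; omega
  · exact absurd (Or.inr h) hnr

lemma flat_le {m : ℕ} {σ : Equiv.Perm (Fin (m+1))} (hf : Flattened σ) {j : Fin (m+1)}
    (hj : IsRunStart σ j) :
    ∀ q : ℕ, ∀ hq : q < m + 1, j.val ≤ q → σ j ≤ σ ⟨q, hq⟩ := by
  intro q
  induction q using Nat.strong_induction_on with
  | _ q ih =>
    intro hq hjq
    rcases eq_or_lt_of_le hjq with heq | hlt
    · have he : j = ⟨q, hq⟩ := Fin.ext heq
      rw [← he]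
    · by_cases hr : IsRunStart σ ⟨q, hq⟩
      · exact le_of_lt (hf j ⟨q, hq⟩ hj hr hlt)
      · have hq0 : q ≠ 0 := by
          intro h0; exact hr (Or.inl (by simp [h0]))
        have hlt2 := not_rs_lt hq0 hr
        have hj1 : j.val ≤ q - 1 := by omega
        exact le_trans (ih (q-1) (by omega) (by omega) hj1) (le_of_lt hlt2)

lemma flat_lt {m : ℕ} {σ : Equiv.Perm (Fin (m+1))} (hf : Flattened σ) {j q : Fin (m+1)}
    (hj : IsRunStart σ j) (h : j.val < q.val) : σ j < σ q := by
  have hle := flat_le hf hj q.val q.isLt (le_of_lt h)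
  have hq : (⟨q.val, q.isLt⟩ : Fin (m+1)) = q := Fin.ext rfl
  rw [hq] at hle
  rcases lt_or_eq_of_le hle with h' | h'
  · exact h'
  · exfalso
    have h2 := congrArg Fin.val (σ.injective h')
    omega

lemma rlm_of_rs {m : ℕ} {σ : Equiv.Perm (Fin (m+1))} (hf : Flattened σ) {q : Fin (m+1)}
    (hrs : ∀ j : Fin (m+1), IsRunStart σ j → q < j → σ q < σ j) : IsRLMin σ q := by
  have key : ∀ r : ℕ, ∀ hr : r < m+1, q.val < r → σ q < σ ⟨r, hr⟩ := by
    intro r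
    induction r using Nat.strong_induction_on with
    | _ r ih =>
      intro hr hqr
      by_cases hrs' : IsRunStart σ ⟨r, hr⟩
      · exact hrs _ hrs' hqr
      · have hr0 : r ≠ 0 := by omega
        have hlt2 := not_rs_lt hr0 hrs'
        rcases eq_or_lt_of_le (show q.val ≤ r - 1 by omega) with heq | hlt
        · have he : q = ⟨r - 1, by omega⟩ := Fin.ext heq
          rw [he]; exact hlt2
        · exact lt_trans (ih (r-1) (by omega) (by omega) hlt) hlt2
  intro j hj
  have h2 := key j.val j.isLt hj
  have hje : (⟨j.val, j.isLt⟩ : Fin (m+1)) = j := Fin.ext rfl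
  rwa [hje] at h2

lemma flat_zero {m : ℕ} {σ : Equiv.Perm (Fin (m+1))} (hf : Flattened σ) : σ 0 = 0 := by
  by_contra hne
  have hto : σ (σ.symm 0) = 0 := σ.apply_symm_apply 0
  have htne : σ.symm 0 ≠ 0 := by intro h; rw [h] at hto; exact hne hto
  have ht0 : (σ.symm 0).val ≠ 0 := fun h => htne (Fin.ext h)
  have hne2 : σ ⟨(σ.symm 0).val - 1, by have := (σ.symm 0).isLt; omega⟩ ≠ 0 := by
    intro h
    replace h := h.trans hto.symm
    have h2 := congrArg Fin.val (σ.injective h)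
    simp at h2; omega
  have hrs : IsRunStart σ (σ.symm 0) := by
    refine Or.inr ?_
    rw [hto]
    exact Fin.pos_iff_ne_zero.mpr hne2
  have hrs0 : IsRunStart σ (0 : Fin (m+1)) := Or.inl rfl
  have h3 := hf 0 (σ.symm 0) hrs0 hrs (Fin.pos_iff_ne_zero.mpr htne)
  rw [hto] at h3
  exact absurd h3 (Fin.not_lt_zero _)

lemma rlm_zero {m : ℕ} {σ : Equiv.Perm (Fin (m+1))} (hf : Flattened σ) :
    IsRLMin σ (0 : Fin (m+1)) := by
  intro j hj
  rw [flat_zero hf]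
  refine Fin.pos_iff_ne_zero.mpr ?_
  intro h
  have hj0 : j = 0 := by
    rw [← flat_zero hf] at h
    exact σ.injective h
  rw [hj0] at hj; exact lt_irrefl _ hj

lemma rlm_last {m : ℕ} (σ : Equiv.Perm (Fin (m+1))) : IsRLMin σ (Fin.last m) := by
  intro j hj
  exact absurd hj (not_lt.mpr (Fin.le_last j))

lemma rs_toU {σ : Equiv.Perm (Fin (n+1))} {p : Fin (n+2)} {j : Fin (n+1)}
    (hrs : IsRunStart σ j) :
    ∃ q : Fin (n+2), IsRunStart (ins σ p) q ∧ ins σ p q = (σ j).castSucc ∧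
      q.val = (if j.val < p.val then j.val else j.val + 1) := by
  have hjlt := j.isLt
  have hplt := p.isLt
  rcases lt_or_ge j.val p.val with hc | hc
  · refine ⟨⟨j.val, by omega⟩, ?_, ?_, by simp [hc]⟩
    · exact (rs_lt hc).mpr hrs
    · rw [ins_lt (show ((⟨j.val, by omega⟩ : Fin (n+2))).val < p.val from hc)]
  · rcases eq_or_lt_of_le hc with heq | hlt
    · refine ⟨⟨j.val + 1, by omega⟩, ?_, ?_, by simp [Nat.not_lt.mpr hc]⟩
      · have he : (⟨j.val + 1, by omega⟩ : Fin (n+2)) = ⟨p.val + 1, by omega⟩ :=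
          Fin.ext (by simp [heq])
        rw [he]; exact rs_succ (by omega)
      · rw [ins_gt (show p.val < ((⟨j.val + 1, by omega⟩ : Fin (n+2))).val by simp; omega)]
        rfl
    · refine ⟨⟨j.val + 1, by omega⟩, ?_, ?_, by simp [Nat.not_lt.mpr hc]⟩
      · exact (rs_gt (show p.val + 1 < ((⟨j.val + 1, by omega⟩ : Fin (n+2))).val by
          simp; omega)).mpr hrs
      · rw [ins_gt (show p.val < ((⟨j.val + 1, by omega⟩ : Fin (n+2))).val by simp; omega)]
        rfl

def cond (σ : Equiv.Perm (Fin (n+1))) (p : Fin (n+2)) : Prop :=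
  p.val = n + 1 ∨ ∃ h : p.val < n + 1, 0 < p.val ∧ IsRLMin σ ⟨p.val, h⟩

lemma rs_fromU {σ : Equiv.Perm (Fin (n+1))} {p q : Fin (n+2)}
    (hq : IsRunStart (ins σ p) q) (hqp : q ≠ p) :
    ∃ jj : Fin (n+1), ins σ p q = (σ jj).castSucc ∧
      jj.val = (if q.val < p.val then q.val else q.val - 1) ∧
      (IsRunStart σ jj ∨ (q.val = p.val + 1 ∧ jj.val = p.val)) := by
  have hplt := p.isLt; have hqlt := q.isLt
  rcases lt_trichotomy q.val p.val with hc | hc | hc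
  · exact ⟨⟨q.val, by omega⟩, ins_lt hc, by simp [hc], Or.inl ((rs_lt hc).mp hq)⟩
  · exact absurd (Fin.ext hc) hqp
  · rcases eq_or_lt_of_le (show p.val + 1 ≤ q.val by omega) with heq | hlt
    · exact ⟨⟨q.val - 1, by omega⟩, ins_gt hc,
        by simp [Nat.not_lt.mpr (le_of_lt hc)], Or.inr ⟨heq.symm, by simp; omega⟩⟩
    · exact ⟨⟨q.val - 1, by omega⟩, ins_gt hc,
        by simp [Nat.not_lt.mpr (le_of_lt hc)], Or.inl ((rs_gt hlt).mp hq)⟩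

lemma flat_ins_flat {σ : Equiv.Perm (Fin (n+1))} {p : Fin (n+2)}
    (hu : Flattened (ins σ p)) : Flattened σ := by
  intro i j hi hj hij
  obtain ⟨qi, hqi, hvi, hvali⟩ := rs_toU (p := p) hi
  obtain ⟨qj, hqj, hvj, hvalj⟩ := rs_toU (p := p) hj
  have hij' : i.val < j.val := hij
  have hlt : qi < qj := by
    rw [Fin.lt_def, hvali, hvalj]; split_ifs <;> omega
  have h2 := hu qi qj hqi hqj hlt
  rw [hvi, hvj] at h2
  exact Fin.castSucc_lt_castSucc_iff.mp h2

lemma flat_ins_iff {σ : Equiv.Perm (Fin (n+1))} {p : Fin (n+2)} :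
    Flattened (ins σ p) ↔ Flattened σ ∧ cond σ p := by
  have hplt := p.isLt
  constructor
  · intro hu
    have hσ := flat_ins_flat hu
    refine ⟨hσ, ?_⟩
    rcases eq_or_lt_of_le (show p.val ≤ n + 1 by omega) with heq | hlt
    · exact Or.inl heq
    · refine Or.inr ⟨hlt, ?_, ?_⟩
      · by_contra h0
        have hp0 : p.val = 0 := by omega
        have h1 : IsRunStart (ins σ p) p := Or.inl hp0
        have h2 : IsRunStart (ins σ p) ⟨p.val + 1, by omega⟩ := rs_succ (by omega)
        have h3 := hu p _ h1 h2 (by rw [Fin.lt_def]; simp)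
        rw [ins_self, ins_gt (show p.val < ((⟨p.val + 1, by omega⟩ : Fin (n+2))).val by
          simp)] at h3
        exact absurd h3 (not_lt.mpr (Fin.le_last _))
      · refine rlm_of_rs hσ ?_
        intro j hjrs hpj
        have hpj' : p.val < j.val := hpj
        obtain ⟨qj, hqj, hvj, hvalj⟩ := rs_toU (p := p) hjrs
        have hq1 : IsRunStart (ins σ p) ⟨p.val + 1, by omega⟩ := rs_succ (by omega)
        have hlt2 : (⟨p.val + 1, by omega⟩ : Fin (n+2)) < qj := by
          rw [Fin.lt_def, hvalj]
          simp [Nat.not_lt.mpr (le_of_lt hpj')]; omega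
        have h3 := hu _ _ hq1 hqj hlt2
        rw [hvj, ins_gt (show p.val < ((⟨p.val + 1, by omega⟩ : Fin (n+2))).val by
          simp)] at h3
        exact Fin.castSucc_lt_castSucc_iff.mp h3
  · rintro ⟨hσ, hcond⟩
    intro q1 q2 hq1 hq2 h12
    have h12' : q1.val < q2.val := h12
    have hp0 : 0 < p.val := by
      rcases hcond with h | ⟨-, h, -⟩
      · omega
      · exact h
    have hne1 : q1 ≠ p := fun h => absurd (rs_self.mp (h ▸ hq1)) (by omega)
    have hne2 : q2 ≠ p := fun h => absurd (rs_self.mp (h ▸ hq2)) (by omega)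
    obtain ⟨j1, hv1, hval1, hrs1⟩ := rs_fromU hq1 hne1
    obtain ⟨j2, hv2, hval2, hrs2⟩ := rs_fromU hq2 hne2
    rw [hv1, hv2]
    refine Fin.castSucc_lt_castSucc_iff.mpr ?_
    have hne1' : q1.val ≠ p.val := fun h => hne1 (Fin.ext h)
    have hne2' : q2.val ≠ p.val := fun h => hne2 (Fin.ext h)
    have hj12 : j1.val < j2.val := by
      rw [hval1, hval2]; split_ifs <;> omega
    rcases hrs1 with hrs1 | ⟨hq1e, hj1e⟩
    · rcases hrs2 with hrs2 | ⟨hq2e, hj2e⟩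
      · exact hσ j1 j2 hrs1 hrs2 hj12
      · exact flat_lt hσ hrs1 hj12
    · rcases hrs2 with hrs2 | ⟨hq2e, hj2e⟩
      · rcases hcond with h | ⟨hl, -, hrlm⟩
        · omega
        · have h4 := hrlm j2 (show (⟨p.val, hl⟩ : Fin (n+1)) < j2 from by
            rw [Fin.lt_def]; simp; omega)
          have hj1p : j1 = ⟨p.val, hl⟩ := Fin.ext hj1e
          rw [hj1p]; exact h4
      · omega

lemma ins_inj : Function.Injective
    (fun x : Equiv.Perm (Fin (n+1)) × Fin (n+2) => ins x.1 x.2) := by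
  rintro ⟨σ, p⟩ ⟨σ', p'⟩ h
  simp only at h
  have hp : p = p' := by
    have h1 : ins σ p p = Fin.last (n+1) := ins_self σ p
    have h2 : ins σ' p' p' = Fin.last (n+1) := ins_self σ' p'
    rw [h] at h1
    exact (ins σ' p').injective (h1.trans h2.symm)
  subst hp
  have hσ : σ = σ' := by
    apply Equiv.ext
    intro j
    have h4 : ins σ p (p.succAbove j) = ins σ' p (p.succAbove j) := by rw [h]
    rw [ins_succAbove, ins_succAbove] at h4
    exact Fin.castSucc_injective _ h4
  rw [hσ]

lemma ins_surj (π : Equiv.Perm (Fin (n+2))) :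
    ∃ x : Equiv.Perm (Fin (n+1)) × Fin (n+2), ins x.1 x.2 = π := by
  classical
  set p := π.symm (Fin.last (n+1)) with hp
  set e : Option (Fin (n+1)) ≃ Option (Fin (n+1)) :=
    ((finSuccEquiv' p).symm.trans (π.trans (finSuccEquiv' (Fin.last (n+1))))) with he
  have hπp : π p = Fin.last (n+1) := π.apply_symm_apply _
  have hnone : e none = none := by
    simp [he, finSuccEquiv'_symm_none, hπp]
  refine ⟨⟨e.removeNone, p⟩, ?_⟩
  have hopt : Equiv.optionCongr e.removeNone = e := by
    apply Equiv.ext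
    intro o
    cases o with
    | none => simp [hnone]
    | some x =>
      have hx : ∃ x', e (some x) = some x' := by
        rcases h2 : e (some x) with _ | x'
        · exfalso
          have h3 := e.injective (h2.trans hnone.symm)
          simp at h3
        · exact ⟨x', rfl⟩
      have h3 := Equiv.removeNone_some e hx
      simp only [Equiv.optionCongr_apply, Option.map_some]
      exact h3
  show ins e.removeNone p = π
  unfold ins
  rw [hopt, he]
  apply Equiv.ext
  intro i
  simp

lemma count_valid (σ : Equiv.Perm (Fin (n+1))) (hf : Flattened σ) {m : ℕ}
    (hc : rlmCount σ = m + 1) :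
    {p : Fin (n+2) | ∃ h : p.val < n + 1, 0 < p.val ∧ IsRLMin σ ⟨p.val, h⟩}.ncard = m := by
  have hset : {p : Fin (n+2) | ∃ h : p.val < n + 1, 0 < p.val ∧ IsRLMin σ ⟨p.val, h⟩}
      = Fin.castSucc '' ({j : Fin (n+1) | IsRLMin σ j} \ {0}) := by
    ext p
    constructor
    · rintro ⟨h, hpos, hrlm⟩
      refine ⟨⟨p.val, h⟩, ⟨hrlm, ?_⟩, Fin.ext rfl⟩
      simp only [Set.mem_singleton_iff]
      intro h0
      have h1 := congrArg Fin.val h0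
      simp only [Fin.val_zero, Fin.val_mk] at h1; omega
    · rintro ⟨j, ⟨hrlm, hj0⟩, rfl⟩
      simp only [Set.mem_singleton_iff] at hj0
      have hjv : j.val ≠ 0 := fun h => hj0 (Fin.ext h)
      refine ⟨by have := j.isLt; simp; omega, by rw [Fin.coe_castSucc]; omega, ?_⟩
      exact hrlm
  rw [hset, Set.ncard_image_of_injective _ (Fin.castSucc_injective _)]
  have h0mem : (0 : Fin (n+1)) ∈ {j : Fin (n+1) | IsRLMin σ j} := rlm_zero hf
  rw [Set.ncard_diff_singleton_of_mem h0mem]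
  unfold rlmCount at hc
  rw [hc]
  simp

lemma step (n m : ℕ) :
    {π : Equiv.Perm (Fin (n+2)) | Flattened π ∧ rlmCount π = m + 2}.ncard
      = (m + 1) * {σ : Equiv.Perm (Fin (n+1)) | Flattened σ ∧ rlmCount σ = m + 2}.ncard
        + {σ : Equiv.Perm (Fin (n+1)) | Flattened σ ∧ rlmCount σ = m + 1}.ncard := by
  classical
  set f : Equiv.Perm (Fin (n+1)) × Fin (n+2) → Equiv.Perm (Fin (n+2)) :=
    fun x => ins x.1 x.2 with hfdef
  set A := {π : Equiv.Perm (Fin (n+2)) | Flattened π ∧ rlmCount π = m + 2} with hA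
  have hsurj : Function.Surjective f := fun π => ins_surj π
  have h1 : A.ncard = (f ⁻¹' A).ncard := by
    conv_lhs => rw [← Set.image_preimage_eq A hsurj]
    rw [Set.ncard_image_of_injective _ ins_inj]
  have hpre : f ⁻¹' A =
      ((fun σ : Equiv.Perm (Fin (n+1)) => (σ, Fin.last (n+1))) ''
        {σ | Flattened σ ∧ rlmCount σ = m + 1})
      ∪ {x : Equiv.Perm (Fin (n+1)) × Fin (n+2) |
          (Flattened x.1 ∧ rlmCount x.1 = m + 2) ∧
          ∃ h : x.2.val < n + 1, 0 < x.2.val ∧ IsRLMin x.1 ⟨x.2.val, h⟩} := by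
    ext ⟨σ, p⟩
    simp only [Set.mem_preimage, hA, Set.mem_setOf_eq, Set.mem_union, Set.mem_image, hfdef]
    constructor
    · rintro ⟨hflat, hcount⟩
      rw [flat_ins_iff] at hflat
      rw [rlmCount_ins] at hcount
      obtain ⟨hσ, hcond⟩ := hflat
      by_cases hc : p.val = n + 1
      · left
        refine ⟨σ, ⟨hσ, ?_⟩, ?_⟩
        · rw [if_pos hc] at hcount; omega
        · exact Prod.ext rfl (Fin.ext (by simp [hc]))
      · right
        rcases hcond with h | h
        · exact absurd h hc
        refine ⟨⟨hσ, ?_⟩, h⟩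
        rw [if_neg hc] at hcount; omega
    · rintro (⟨σ', ⟨hσ', hcnt⟩, heq⟩ | ⟨⟨hσ, hcnt⟩, hex⟩)
      · injection heq with hh1 hh2
        subst hh1; subst hh2
        constructor
        · rw [flat_ins_iff]
          exact ⟨hσ', Or.inl (by simp)⟩
        · rw [rlmCount_ins, if_pos (by simp)]
          omega
      · constructor
        · rw [flat_ins_iff]
          exact ⟨hσ, Or.inr hex⟩
        · rw [rlmCount_ins, if_neg (by obtain ⟨h, -, -⟩ := hex; omega)]
          omega
  have hdisj : Disjoint
      ((fun σ : Equiv.Perm (Fin (n+1)) => (σ, Fin.last (n+1))) ''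
        {σ | Flattened σ ∧ rlmCount σ = m + 1})
      {x : Equiv.Perm (Fin (n+1)) × Fin (n+2) |
          (Flattened x.1 ∧ rlmCount x.1 = m + 2) ∧
          ∃ h : x.2.val < n + 1, 0 < x.2.val ∧ IsRLMin x.1 ⟨x.2.val, h⟩} := by
    rw [Set.disjoint_left]
    rintro x ⟨σ', -, rfl⟩ ⟨-, h, -, -⟩
    simp at h
  have hcard1 : ((fun σ : Equiv.Perm (Fin (n+1)) => (σ, Fin.last (n+1))) ''
        {σ | Flattened σ ∧ rlmCount σ = m + 1}).ncard
      = {σ : Equiv.Perm (Fin (n+1)) | Flattened σ ∧ rlmCount σ = m + 1}.ncard :=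
    Set.ncard_image_of_injective _ (fun a b h => congrArg Prod.fst h)
  have hcard2 : {x : Equiv.Perm (Fin (n+1)) × Fin (n+2) |
          (Flattened x.1 ∧ rlmCount x.1 = m + 2) ∧
          ∃ h : x.2.val < n + 1, 0 < x.2.val ∧ IsRLMin x.1 ⟨x.2.val, h⟩}.ncard
      = (m + 1) * {σ : Equiv.Perm (Fin (n+1)) | Flattened σ ∧ rlmCount σ = m + 2}.ncard := by
    rw [Set.ncard_eq_toFinset_card', Set.ncard_eq_toFinset_card',
      Set.toFinset_setOf, Set.toFinset_setOf]
    rw [Finset.card_eq_sum_card_fiberwise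
      (f := Prod.fst)
      (t := Finset.univ.filter fun σ : Equiv.Perm (Fin (n+1)) =>
        Flattened σ ∧ rlmCount σ = m + 2)
      (fun x hx => by
        simp only [Finset.mem_coe, Finset.mem_filter, Finset.mem_univ, true_and] at hx ⊢
        exact hx.1)]
    rw [Finset.sum_congr rfl (g := fun _ => m + 1) ?hfib]
    · rw [Finset.sum_const, smul_eq_mul, mul_comm]
    case hfib =>
      intro σ hσmem
      simp only [Finset.mem_filter, Finset.mem_univ, true_and] at hσmem
      have hfibeq : ((Finset.univ.filter fun x : Equiv.Perm (Fin (n+1)) × Fin (n+2) =>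
            (Flattened x.1 ∧ rlmCount x.1 = m + 2) ∧
            ∃ h : x.2.val < n + 1, 0 < x.2.val ∧ IsRLMin x.1 ⟨x.2.val, h⟩).filter
            fun x => x.1 = σ)
          = Finset.image (fun p => (σ, p))
              (Finset.univ.filter fun p : Fin (n+2) =>
                ∃ h : p.val < n + 1, 0 < p.val ∧ IsRLMin σ ⟨p.val, h⟩) := by
        ext ⟨σ', p⟩
        simp only [Finset.mem_filter, Finset.mem_univ, true_and, Finset.mem_image]
        constructor
        · rintro ⟨⟨-, hex⟩, heq⟩
          subst heq
          exact ⟨p, hex, rfl⟩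
        · rintro ⟨p', hp', heq⟩
          injection heq with hh1 hh2
          subst hh1; subst hh2
          exact ⟨⟨hσmem, hp'⟩, rfl⟩
      rw [hfibeq, Finset.card_image_of_injective _
        (fun a b h => congrArg Prod.snd h)]
      have hcv := count_valid σ hσmem.1 (m := m + 1) hσmem.2
      rw [Set.ncard_eq_toFinset_card', Set.toFinset_setOf] at hcv
      exact hcv
  rw [h1, hpre, Set.ncard_union_eq hdisj (Set.toFinite _) (Set.toFinite _), hcard1, hcard2]
  omega

lemma base (k : ℕ) :
    {π : Equiv.Perm (Fin 1) | Flattened π ∧ rlmCount π = k + 1}.ncard = stirling2 0 k := by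
  cases k with
  | zero =>
    have huniv : {π : Equiv.Perm (Fin 1) | Flattened π ∧ rlmCount π = 1} = Set.univ := by
      ext π
      simp only [Set.mem_setOf_eq, Set.mem_univ, iff_true]
      refine ⟨?_, ?_⟩
      · intro i j _ _ hij
        exact absurd (show i.val < j.val from hij)
          (by have := i.isLt; have := j.isLt; omega)
      · have hu : {i : Fin 1 | IsRLMin π i} = Set.univ := by
          ext i
          simp only [Set.mem_setOf_eq, Set.mem_univ, iff_true]
          intro j hj
          exact absurd (show i.val < j.val from hj)
            (by have := i.isLt; have := j.isLt; omega)
        unfold rlmCount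
        rw [hu, Set.ncard_univ, Nat.card_eq_fintype_card, Fintype.card_fin]
    rw [huniv, Set.ncard_univ]
    show Nat.card (Equiv.Perm (Fin 1)) = 1
    rw [Nat.card_eq_fintype_card, Fintype.card_perm, Fintype.card_fin]
    rfl
  | succ k =>
    have hempty : {π : Equiv.Perm (Fin 1) | Flattened π ∧ rlmCount π = k + 2} = ∅ := by
      ext π
      simp only [Set.mem_setOf_eq, Set.mem_empty_iff_false, iff_false]
      rintro ⟨-, hc⟩
      have hle : {i : Fin 1 | IsRLMin π i}.ncard ≤ 1 := by
        have h2 := Set.ncard_le_ncard (Set.subset_univ {i : Fin 1 | IsRLMin π i})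
          (Set.toFinite _)
        rwa [Set.ncard_univ, Nat.card_eq_fintype_card, Fintype.card_fin] at h2
      unfold rlmCount at hc
      omega
    rw [hempty]
    simp [stirling2]

lemma rlm_two {m : ℕ} {π : Equiv.Perm (Fin (m+2))} (hf : Flattened π) : 2 ≤ rlmCount π := by
  have h1 : ({0, Fin.last (m+1)} : Set (Fin (m+2))) ⊆ {i | IsRLMin π i} := by
    intro i hi
    simp only [Set.mem_insert_iff, Set.mem_singleton_iff] at hi
    rcases hi with rfl | rfl
    · exact rlm_zero hf
    · exact rlm_last π
  have h2 := Set.ncard_le_ncard h1 (Set.toFinite _)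
  rw [Set.ncard_pair (show (0 : Fin (m+2)) ≠ Fin.last (m+1) from ?_)] at h2
  · exact h2
  · intro h
    have h3 := congrArg Fin.val h
    simp at h3

lemma step0 (m : ℕ) :
    {π : Equiv.Perm (Fin (m+2)) | Flattened π ∧ rlmCount π = 1}.ncard = 0 := by
  have hempty : {π : Equiv.Perm (Fin (m+2)) | Flattened π ∧ rlmCount π = 1} = ∅ := by
    ext π
    simp only [Set.mem_setOf_eq, Set.mem_empty_iff_false, iff_false]
    rintro ⟨hf, hc⟩
    have := rlm_two hf
    omega
  rw [hempty, Set.ncard_empty]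

lemma key : ∀ n k : ℕ,
    {π : Equiv.Perm (Fin (n+1)) | Flattened π ∧ rlmCount π = k + 1}.ncard = stirling2 n k := by
  intro n
  induction n with
  | zero => exact base
  | succ n ih =>
    intro k
    cases k with
    | zero => exact step0 n
    | succ k =>
      rw [step n k, ih (k+1), ih k]
      rfl

end FlatAux

theorem flattened_rlm_count (n k : ℕ) (hn : 1 ≤ n) (hk : 1 ≤ k) :
    {π : Equiv.Perm (Fin n) | Flattened π ∧ rlmCount π = k}.ncard =
      stirling2 (n - 1) (k - 1) := by
  obtain ⟨n', rfl⟩ : ∃ n', n = n' + 1 := ⟨n - 1, by omega⟩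
  obtain ⟨k', rfl⟩ : ∃ k', k = k' + 1 := ⟨k - 1, by omega⟩
  simp only [Nat.add_sub_cancel]
  exact FlatAux.key n' k'
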